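/- arXiv:2506.03109 — 5 statements merged into one kernel-verified Lean document; each statement's English description precedes it below -/
import Mathlib

section
/- Let X be a measurable space with probability measure μ, and let G_sw, G_w, G_star : X → (probability vectors on Fin k) be measurable maps such that the functions x ↦ D_f(G_sw x ‖ G_star x), x ↦ D_f(G_w x ‖ G_star x) and x ↦ D_f(G_sw x ‖ G_w x) are μ-integrable. Let f : ℝ → ℝ be convex, differentiable on (0,∞), with f(1) = 0. Suppose there is L ≥ 0 such that for every x ∈ X and every index i, |f'(t)| ≤ L for all t in the closed interval with endpoints (G_sw x) i / (G_star x) i and (G_w x) i / (G_star x) i, and suppose there is C ≥ 0 such that TV(G_sw x, G_w x) ≤ C * Real.sqrt (D_f(G_sw x ‖ G_w x)) for every x ∈ X. Then |R_f(G_sw, G_star) − R_f(G_w, G_star)| ≤ 2 * L * C * Real.sqrt (R_f(G_sw, G_w)). -/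
open scoped BigOperators
open MeasureTheory

/-- `p` is a probability vector on `Fin k`: all coordinates positive, summing to one. -/
def IsProbVec {k : ℕ} (p : Fin k → ℝ) : Prop :=
  (∀ i, 0 < p i) ∧ ∑ i, p i = 1

/-- Discrete `f`-divergence `D_f(p‖q) = ∑ i, q i * f (p i / q i)`. -/
noncomputable def fDiv {k : ℕ} (f : ℝ → ℝ) (p q : Fin k → ℝ) : ℝ :=
  ∑ i, q i * f (p i / q i)

/-- Total variation distance `TV(p,q) = (1/2) ∑ i, |p i − q i|`. -/
noncomputable def tvDist {k : ℕ} (p q : Fin k → ℝ) : ℝ :=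
  (1 / 2) * ∑ i, |p i - q i|

/-- Population disagreement `R_f(g,h) = ∫ D_f(g x ‖ h x) ∂μ`. -/
noncomputable def popDis {k : ℕ} {X : Type*} [MeasurableSpace X] (μ : Measure X)
    (f : ℝ → ℝ) (g h : X → Fin k → ℝ) : ℝ :=
  ∫ x, fDiv f (g x) (h x) ∂μ
lemma fDiv_nonneg' {k : ℕ} {f : ℝ → ℝ} (hconv : ConvexOn ℝ Set.univ f) (hf1 : f 1 = 0)
    {p q : Fin k → ℝ} (hp : IsProbVec p) (hq : IsProbVec q) : 0 ≤ fDiv f p q := by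
  have h := hconv.map_sum_le (t := Finset.univ) (w := q) (p := fun i => p i / q i)
    (fun i _ => (hq.1 i).le) hq.2 (fun i _ => Set.mem_univ _)
  have hsum : ∑ i, q i • (p i / q i) = 1 := by
    rw [← hp.2]
    refine Finset.sum_congr rfl fun i _ => ?_
    rw [smul_eq_mul]; field_simp [(hq.1 i).ne']
  rw [hsum, hf1] at h
  simpa [fDiv, smul_eq_mul] using h

theorem stmt1 {k : ℕ} (hk : 2 ≤ k) {X : Type*} [MeasurableSpace X]
    (μ : Measure X) [IsProbabilityMeasure μ]
    (Gsw Gw Gstar : X → Fin k → ℝ)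
    (hGsw : Measurable Gsw) (hGw : Measurable Gw) (hGstar : Measurable Gstar)
    (hGswP : ∀ x, IsProbVec (Gsw x)) (hGwP : ∀ x, IsProbVec (Gw x))
    (hGstarP : ∀ x, IsProbVec (Gstar x))
    (f : ℝ → ℝ) (hconv : ConvexOn ℝ Set.univ f)
    (hdiff : DifferentiableOn ℝ f (Set.Ioi (0 : ℝ))) (hf1 : f 1 = 0)
    (hint1 : Integrable (fun x => fDiv f (Gsw x) (Gstar x)) μ)
    (hint2 : Integrable (fun x => fDiv f (Gw x) (Gstar x)) μ)
    (hint3 : Integrable (fun x => fDiv f (Gsw x) (Gw x)) μ)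
    (L : ℝ) (hL : 0 ≤ L)
    (hL' : ∀ (x : X) (i : Fin k) (t : ℝ),
      t ∈ Set.uIcc (Gsw x i / Gstar x i) (Gw x i / Gstar x i) → |deriv f t| ≤ L)
    (C : ℝ) (hC : 0 ≤ C)
    (hTV : ∀ x, tvDist (Gsw x) (Gw x) ≤ C * Real.sqrt (fDiv f (Gsw x) (Gw x))) :
    |popDis μ f Gsw Gstar - popDis μ f Gw Gstar| ≤
      2 * L * C * Real.sqrt (popDis μ f Gsw Gw) := by
  -- pointwise divergence nonneg
  have hD3nn : ∀ x, 0 ≤ fDiv f (Gsw x) (Gw x) := fun x =>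
    fDiv_nonneg' hconv hf1 (hGswP x) (hGwP x)
  -- pointwise bound
  have key : ∀ x, |fDiv f (Gsw x) (Gstar x) - fDiv f (Gw x) (Gstar x)| ≤
      2 * L * C * Real.sqrt (fDiv f (Gsw x) (Gw x)) := by
    intro x
    have step1 : |fDiv f (Gsw x) (Gstar x) - fDiv f (Gw x) (Gstar x)| ≤
        L * ∑ i, |Gsw x i - Gw x i| := by
      rw [fDiv, fDiv, ← Finset.sum_sub_distrib]
      refine le_trans (Finset.abs_sum_le_sum_abs _ _) ?_
      rw [Finset.mul_sum]
      refine Finset.sum_le_sum fun i _ => ?_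
      have hq := (hGstarP x).1 i
      have ha : (0:ℝ) < Gsw x i / Gstar x i := div_pos ((hGswP x).1 i) hq
      have hb : (0:ℝ) < Gw x i / Gstar x i := div_pos ((hGwP x).1 i) hq
      have hsub : Set.uIcc (Gsw x i / Gstar x i) (Gw x i / Gstar x i) ⊆ Set.Ioi (0:ℝ) := by
        intro t ht
        rcases Set.mem_uIcc.1 ht with ⟨h1, _⟩ | ⟨h1, _⟩ <;> exact lt_of_lt_of_le (by assumption) h1
      have hlip : ‖f (Gw x i / Gstar x i) - f (Gsw x i / Gstar x i)‖ ≤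
          L * ‖Gw x i / Gstar x i - Gsw x i / Gstar x i‖ := by
        refine Convex.norm_image_sub_le_of_norm_deriv_le
          (fun t ht => (hdiff.differentiableAt (Ioi_mem_nhds (hsub ht))))
          (fun t ht => hL' x i t ht) (convex_uIcc _ _) Set.left_mem_uIcc Set.right_mem_uIcc
      rw [← mul_sub, abs_mul, abs_of_pos hq]
      have : |f (Gsw x i / Gstar x i) - f (Gw x i / Gstar x i)| ≤
          L * |Gsw x i / Gstar x i - Gw x i / Gstar x i| := by
        rw [abs_sub_comm, abs_sub_comm (Gsw x i / Gstar x i)]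
        exact hlip
      calc Gstar x i * |f (Gsw x i / Gstar x i) - f (Gw x i / Gstar x i)|
          ≤ Gstar x i * (L * |Gsw x i / Gstar x i - Gw x i / Gstar x i|) := by
            exact mul_le_mul_of_nonneg_left this hq.le
        _ = L * |Gsw x i - Gw x i| := by
            rw [div_sub_div_same, abs_div, abs_of_pos hq]
            field_simp
    have step2 : L * ∑ i, |Gsw x i - Gw x i| = 2 * L * tvDist (Gsw x) (Gw x) := by
      rw [tvDist]; ring
    calc |fDiv f (Gsw x) (Gstar x) - fDiv f (Gw x) (Gstar x)|
        ≤ 2 * L * tvDist (Gsw x) (Gw x) := by rw [← step2]; exact step1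
      _ ≤ 2 * L * (C * Real.sqrt (fDiv f (Gsw x) (Gw x))) := by
          exact mul_le_mul_of_nonneg_left (hTV x) (by positivity)
      _ = 2 * L * C * Real.sqrt (fDiv f (Gsw x) (Gw x)) := by ring
  set R := popDis μ f Gsw Gw with hR
  have hRnn : 0 ≤ R := integral_nonneg fun x => hD3nn x
  -- for every s > 0 the LHS is ≤ 2LC * (R/(2s) + s/2)
  have main : ∀ s : ℝ, 0 < s →
      |popDis μ f Gsw Gstar - popDis μ f Gw Gstar| ≤
        2 * L * C * (R / (2 * s) + s / 2) := by
    intro s hs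
    have keyS : ∀ x, |fDiv f (Gsw x) (Gstar x) - fDiv f (Gw x) (Gstar x)| ≤
        2 * L * C * (fDiv f (Gsw x) (Gw x) / (2 * s) + s / 2) := by
      intro x
      refine (key x).trans (mul_le_mul_of_nonneg_left ?_ (by positivity))
      have h := Real.sq_sqrt (hD3nn x)
      set t := Real.sqrt (fDiv f (Gsw x) (Gw x)) with ht
      have htnn : 0 ≤ t := Real.sqrt_nonneg _
      rw [← h]
      rw [div_add_div _ _ (by positivity : (2:ℝ)*s ≠ 0) two_ne_zero,
        le_div_iff₀ (by positivity : (0:ℝ) < 2*s*2)]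
      nlinarith [sq_nonneg (t - s)]
    have hintdiff : Integrable (fun x => fDiv f (Gsw x) (Gstar x) - fDiv f (Gw x) (Gstar x)) μ :=
      hint1.sub hint2
    have hintg : Integrable (fun x => 2 * L * C * (fDiv f (Gsw x) (Gw x) / (2 * s) + s / 2)) μ := by
      exact (((hint3.div_const (2*s)).add (integrable_const (s/2))).const_mul _)
    calc |popDis μ f Gsw Gstar - popDis μ f Gw Gstar|
        = |∫ x, (fDiv f (Gsw x) (Gstar x) - fDiv f (Gw x) (Gstar x)) ∂μ| := by
          rw [integral_sub hint1 hint2]; rfl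
      _ ≤ ∫ x, |fDiv f (Gsw x) (Gstar x) - fDiv f (Gw x) (Gstar x)| ∂μ := by
          simpa [Real.norm_eq_abs] using
            norm_integral_le_integral_norm (μ := μ)
              (fun x => fDiv f (Gsw x) (Gstar x) - fDiv f (Gw x) (Gstar x))
      _ ≤ ∫ x, 2 * L * C * (fDiv f (Gsw x) (Gw x) / (2 * s) + s / 2) ∂μ :=
          integral_mono hintdiff.abs hintg keyS
      _ = 2 * L * C * (R / (2 * s) + s / 2) := by
          rw [integral_const_mul, integral_add (hint3.div_const _) (integrable_const _),
            integral_div, integral_const]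
          simp [hR, popDis, measure_univ]
  rcases eq_or_lt_of_le hRnn with hR0 | hRpos
  · rw [← hR0, Real.sqrt_zero, mul_zero]
    refine le_of_forall_pos_le_add fun ε hε => ?_
    have hs : (0:ℝ) < ε / (2 * L * C + 1) := by positivity
    have := main _ hs
    rw [← hR0] at this
    have h2 : 2 * L * C * ((0:ℝ) / (2 * (ε / (2 * L * C + 1))) + ε / (2 * L * C + 1) / 2) ≤ ε := by
      have hd : (0:ℝ) < (2 * L * C + 1) * 2 := by positivity
      rw [zero_div, zero_add, div_div, ← mul_div_assoc, div_le_iff₀ hd]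
      nlinarith [mul_nonneg (mul_nonneg hε.le hL) hC]
    linarith [this.trans h2]
  · have hs : (0:ℝ) < Real.sqrt R := Real.sqrt_pos.2 hRpos
    refine (main _ hs).trans (le_of_eq ?_)
    have : R / (2 * Real.sqrt R) + Real.sqrt R / 2 = Real.sqrt R := by
      rw [div_add_div _ _ (by positivity) two_ne_zero]
      rw [div_eq_iff (by positivity : (2:ℝ) * Real.sqrt R * 2 ≠ 0)]
      nlinarith [Real.sq_sqrt hRnn, Real.sqrt_nonneg R]
    rw [this]
end

section
/- Let X be a measurable space with probability measure μ, let Θ be a measurable space with probability measure ν, and let Ĝ : Θ × X → (probability vectors on Fin k) and G_w, G_star : X → (probability vectors on Fin k) be measurable. Let f : ℝ → ℝ be convex, differentiable on (0,∞), with f(1) = 0. Suppose there is L ≥ 0 such that for every θ ∈ Θ, x ∈ X, and index i, |f'(t)| ≤ L for all t in the closed interval with endpoints (Ĝ θ x) i / (G_star x) i and (G_w x) i / (G_star x) i; there is C ≥ 0 such that TV(Ĝ θ x, G_w x) ≤ C * Real.sqrt (D_f(Ĝ θ x ‖ G_w x)) for all θ, x; and all relevant maps θ ↦ R_f(Ĝ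 θ, G_star), θ ↦ R_f(Ĝ θ, G_w) are defined and ν-integrable. Then |∫ (R_f(Ĝ θ, G_star) − R_f(G_w, G_star)) ∂ν(θ)| ≤ 2 * L * C * Real.sqrt (∫ R_f(Ĝ θ, G_w) ∂ν(θ)). -/
open scoped BigOperators
open MeasureTheory

lemma integrable_sqrt_of_integrable {X : Type*} [MeasurableSpace X] {μ : Measure X}
    [IsProbabilityMeasure μ] {g : X → ℝ} (hg : Integrable g μ) (h0 : ∀ x, 0 ≤ g x) :
    Integrable (fun x => Real.sqrt (g x)) μ := by
  refine Integrable.mono' ((hg.add (integrable_const 1)).div_const 2) ?_ ?_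
  · exact (Real.continuous_sqrt.comp_aestronglyMeasurable hg.aestronglyMeasurable)
  · filter_upwards with x
    rw [Real.norm_eq_abs, abs_of_nonneg (Real.sqrt_nonneg _)]
    simp only [Pi.add_apply]
    nlinarith [Real.sq_sqrt (h0 x), Real.sqrt_nonneg (g x), sq_nonneg (Real.sqrt (g x) - 1)]

lemma integral_sqrt_le' {X : Type*} [MeasurableSpace X] {μ : Measure X}
    [IsProbabilityMeasure μ] {g : X → ℝ} (hg : Integrable g μ) (h0 : ∀ x, 0 ≤ g x) :
    ∫ x, Real.sqrt (g x) ∂μ ≤ Real.sqrt (∫ x, g x ∂μ) := by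
  set a := ∫ x, g x ∂μ with ha
  have ha0 : 0 ≤ a := integral_nonneg h0
  rcases eq_or_lt_of_le ha0 with h | h
  · have hz : g =ᵐ[μ] 0 := (integral_eq_zero_iff_of_nonneg h0 hg).1 h.symm
    have : (fun x => Real.sqrt (g x)) =ᵐ[μ] 0 := by
      filter_upwards [hz] with x hx; simp [hx]
    rw [integral_congr_ae this]; simp [Real.sqrt_nonneg]
  · have hsa : 0 < Real.sqrt a := Real.sqrt_pos.2 h
    have hpt : ∀ x, Real.sqrt (g x) ≤ (g x + a) / (2 * Real.sqrt a) := by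
      intro x
      rw [le_div_iff₀ (by positivity)]
      nlinarith [Real.sq_sqrt (h0 x), Real.sq_sqrt ha0, sq_nonneg (Real.sqrt (g x) - Real.sqrt a),
        Real.sqrt_nonneg (g x)]
    calc ∫ x, Real.sqrt (g x) ∂μ ≤ ∫ x, (g x + a) / (2 * Real.sqrt a) ∂μ :=
          integral_mono (integrable_sqrt_of_integrable hg h0)
            ((hg.add (integrable_const a)).div_const _) hpt
      _ = (a + a) / (2 * Real.sqrt a) := by
          rw [integral_div, integral_add hg (integrable_const a), integral_const]
          simp
          rw [← ha]
      _ = Real.sqrt a := by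
          rw [show a + a = 2 * Real.sqrt a * Real.sqrt a by
              rw [mul_assoc, Real.mul_self_sqrt ha0]; ring, mul_div_assoc]
          field_simp

theorem stmt8 {k : ℕ} (hk : 2 ≤ k) {X Θ : Type*} [MeasurableSpace X] [MeasurableSpace Θ]
    (μ : Measure X) [IsProbabilityMeasure μ]
    (ν : Measure Θ) [IsProbabilityMeasure ν]
    (Ghat : Θ → X → Fin k → ℝ) (Gw Gstar : X → Fin k → ℝ)
    (hGhat : Measurable (Function.uncurry Ghat))
    (hGw : Measurable Gw) (hGstar : Measurable Gstar)
    (hGhatP : ∀ θ x, IsProbVec (Ghat θ x)) (hGwP : ∀ x, IsProbVec (Gw x))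
    (hGstarP : ∀ x, IsProbVec (Gstar x))
    (f : ℝ → ℝ) (hconv : ConvexOn ℝ Set.univ f)
    (hdiff : DifferentiableOn ℝ f (Set.Ioi (0 : ℝ))) (hf1 : f 1 = 0)
    (L : ℝ) (hL : 0 ≤ L)
    (hL' : ∀ (θ : Θ) (x : X) (i : Fin k) (t : ℝ),
      t ∈ Set.uIcc (Ghat θ x i / Gstar x i) (Gw x i / Gstar x i) → |deriv f t| ≤ L)
    (C : ℝ) (hC : 0 ≤ C)
    (hTV : ∀ θ x, tvDist (Ghat θ x) (Gw x) ≤ C * Real.sqrt (fDiv f (Ghat θ x) (Gw x)))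
    (hint1 : ∀ θ, Integrable (fun x => fDiv f (Ghat θ x) (Gstar x)) μ)
    (hint2 : Integrable (fun x => fDiv f (Gw x) (Gstar x)) μ)
    (hint3 : ∀ θ, Integrable (fun x => fDiv f (Ghat θ x) (Gw x)) μ)
    (hint4 : Integrable (fun θ => popDis μ f (Ghat θ) Gstar) ν)
    (hint5 : Integrable (fun θ => popDis μ f (Ghat θ) Gw) ν) :
    |∫ θ, (popDis μ f (Ghat θ) Gstar - popDis μ f Gw Gstar) ∂ν| ≤
      2 * L * C * Real.sqrt (∫ θ, popDis μ f (Ghat θ) Gw ∂ν) := by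
  -- pointwise bound
  have key : ∀ θ x, |fDiv f (Ghat θ x) (Gstar x) - fDiv f (Gw x) (Gstar x)| ≤
      2 * L * C * Real.sqrt (fDiv f (Ghat θ x) (Gw x)) := by
    intro θ x
    set p := Ghat θ x with hp
    set r := Gw x with hr
    set q := Gstar x with hq
    have hqpos : ∀ i, 0 < q i := (hGstarP x).1
    have hdiffsum : fDiv f p q - fDiv f r q
        = ∑ i, q i * (f (p i / q i) - f (r i / q i)) := by
      simp [fDiv, mul_sub, Finset.sum_sub_distrib]
    have step1 : ∀ i, |q i * (f (p i / q i) - f (r i / q i))| ≤ L * |p i - r i| := by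
      intro i
      set a := p i / q i with haa
      set b := r i / q i with hbb
      have hsub : Set.uIcc a b ⊆ Set.Ioi (0 : ℝ) := by
        intro t ht
        rw [Set.mem_uIcc] at ht
        have hapos : 0 < a := div_pos ((hGhatP θ x).1 i) (hqpos i)
        have hb : 0 < b := div_pos ((hGwP x).1 i) (hqpos i)
        rcases ht with ⟨h1, _⟩ | ⟨h1, _⟩ <;> exact Set.mem_Ioi.2 (by linarith)
      have hdt : ∀ t ∈ Set.uIcc a b, DifferentiableAt ℝ f t := fun t ht =>
        hdiff.differentiableAt (isOpen_Ioi.mem_nhds (hsub ht))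
      have hbd : ∀ t ∈ Set.uIcc a b, ‖deriv f t‖ ≤ L := fun t ht => by
        rw [Real.norm_eq_abs]; exact hL' θ x i t ht
      have hmvt : ‖f a - f b‖ ≤ L * ‖a - b‖ :=
        Convex.norm_image_sub_le_of_norm_deriv_le hdt hbd (convex_uIcc a b)
          Set.right_mem_uIcc Set.left_mem_uIcc
      rw [Real.norm_eq_abs, Real.norm_eq_abs] at hmvt
      have hab : q i * |a - b| = |p i - r i| := by
        rw [haa, hbb, div_sub_div_same, abs_div, abs_of_pos (hqpos i),
          mul_div_cancel₀ _ (hqpos i).ne']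
      calc |q i * (f a - f b)| = q i * |f a - f b| := by
            rw [abs_mul, abs_of_pos (hqpos i)]
        _ ≤ q i * (L * |a - b|) := by
            exact mul_le_mul_of_nonneg_left hmvt (hqpos i).le
        _ = L * (q i * |a - b|) := by ring
        _ = L * |p i - r i| := by rw [hab]
    calc |fDiv f p q - fDiv f r q| = |∑ i, q i * (f (p i / q i) - f (r i / q i))| := by
          rw [hdiffsum]
      _ ≤ ∑ i, |q i * (f (p i / q i) - f (r i / q i))| := Finset.abs_sum_le_sum_abs _ _
      _ ≤ ∑ i, L * |p i - r i| := Finset.sum_le_sum fun i _ => step1 i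
      _ = (2 * L) * tvDist p r := by
          rw [tvDist, ← Finset.mul_sum]; ring
      _ ≤ (2 * L) * (C * Real.sqrt (fDiv f p r)) := by
          exact mul_le_mul_of_nonneg_left (hTV θ x) (by positivity)
      _ = 2 * L * C * Real.sqrt (fDiv f p r) := by ring
  have hD0 : ∀ θ x, 0 ≤ fDiv f (Ghat θ x) (Gw x) := fun θ x =>
    fDiv_nonneg' hconv hf1 (hGhatP θ x) (hGwP x)
  -- per-θ bound
  have keyθ : ∀ θ, |popDis μ f (Ghat θ) Gstar - popDis μ f Gw Gstar| ≤
      2 * L * C * Real.sqrt (popDis μ f (Ghat θ) Gw) := by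
    intro θ
    have h1 : popDis μ f (Ghat θ) Gstar - popDis μ f Gw Gstar
        = ∫ x, (fDiv f (Ghat θ x) (Gstar x) - fDiv f (Gw x) (Gstar x)) ∂μ :=
      (integral_sub (hint1 θ) hint2).symm
    rw [h1]
    calc |∫ x, (fDiv f (Ghat θ x) (Gstar x) - fDiv f (Gw x) (Gstar x)) ∂μ|
        ≤ ∫ x, |fDiv f (Ghat θ x) (Gstar x) - fDiv f (Gw x) (Gstar x)| ∂μ := by
          simpa [Real.norm_eq_abs] using norm_integral_le_integral_norm
            (fun x => fDiv f (Ghat θ x) (Gstar x) - fDiv f (Gw x) (Gstar x)) (μ := μ)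
      _ ≤ ∫ x, 2 * L * C * Real.sqrt (fDiv f (Ghat θ x) (Gw x)) ∂μ :=
          integral_mono ((hint1 θ).sub hint2).abs
            ((integrable_sqrt_of_integrable (hint3 θ) (hD0 θ)).const_mul _) (key θ)
      _ = 2 * L * C * ∫ x, Real.sqrt (fDiv f (Ghat θ x) (Gw x)) ∂μ := integral_const_mul _ _
      _ ≤ 2 * L * C * Real.sqrt (popDis μ f (Ghat θ) Gw) := by
          exact mul_le_mul_of_nonneg_left (integral_sqrt_le' (hint3 θ) (hD0 θ)) (by positivity)
  have hR0 : ∀ θ, 0 ≤ popDis μ f (Ghat θ) Gw := fun θ => integral_nonneg (hD0 θ)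
  calc |∫ θ, (popDis μ f (Ghat θ) Gstar - popDis μ f Gw Gstar) ∂ν|
      ≤ ∫ θ, |popDis μ f (Ghat θ) Gstar - popDis μ f Gw Gstar| ∂ν := by
        simpa [Real.norm_eq_abs] using norm_integral_le_integral_norm
          (fun θ => popDis μ f (Ghat θ) Gstar - popDis μ f Gw Gstar) (μ := ν)
    _ ≤ ∫ θ, 2 * L * C * Real.sqrt (popDis μ f (Ghat θ) Gw) ∂ν :=
        integral_mono (hint4.sub (integrable_const _)).abs
          ((integrable_sqrt_of_integrable hint5 hR0).const_mul _) keyθ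
    _ = 2 * L * C * ∫ θ, Real.sqrt (popDis μ f (Ghat θ) Gw) ∂ν := integral_const_mul _ _
    _ ≤ 2 * L * C * Real.sqrt (∫ θ, popDis μ f (Ghat θ) Gw ∂ν) := by
        exact mul_le_mul_of_nonneg_left (integral_sqrt_le' hint5 hR0) (by positivity)
end

section
/- Let (Θ, Q) be a probability space, f : (0,∞) → ℝ convex and differentiable, α > 0, β ∈ ℝ, and L : Θ → ℝ measurable. Let g̃ : Θ → (0,∞) be measurable with ∫ g̃ ∂Q = 1, f'(g̃(θ)) = −α * L(θ) − β for Q-almost every θ, and with f ∘ g̃ and L * g̃ Q-integrable. Then for every measurable g : Θ → (0,∞) with ∫ g ∂Q = 1 and f ∘ g, L * g Q-integrable, one has ∫ (f(g̃(θ)) + α * L(θ) * g̃(θ)) ∂Q(θ) ≤ ∫ (f(g(θ)) + α * L(θ) * g(θ)) ∂Q(θ). -/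
open MeasureTheory

lemma grad_ineq {f : ℝ → ℝ} (hconv : ConvexOn ℝ (Set.Ioi (0 : ℝ)) f)
    (hdiff : DifferentiableOn ℝ f (Set.Ioi (0 : ℝ)))
    {x y : ℝ} (hx : 0 < x) (hy : 0 < y) :
    f x + deriv f x * (y - x) ≤ f y := by
  have hdx : DifferentiableAt ℝ f x :=
    (hdiff x hx).differentiableAt (isOpen_Ioi.mem_nhds hx)
  rcases lt_trichotomy x y with h | h | h
  · have := hconv.deriv_le_slope hx hy h hdx
    rw [slope_def_field] at this
    have h2 : deriv f x * (y - x) ≤ f y - f x := by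
      have hyx : 0 < y - x := by linarith
      calc deriv f x * (y - x) ≤ ((f y - f x) / (y - x)) * (y - x) := by
            exact mul_le_mul_of_nonneg_right this hyx.le
        _ = f y - f x := by field_simp
    linarith
  · simp [h]
  · have := hconv.slope_le_deriv hy hx h hdx
    rw [slope_def_field] at this
    have hxy : 0 < x - y := by linarith
    have h2 : f x - f y ≤ deriv f x * (x - y) := by
      calc f x - f y = ((f x - f y) / (x - y)) * (x - y) := by field_simp
        _ ≤ deriv f x * (x - y) := mul_le_mul_of_nonneg_right this hxy.le
    nlinarith

theorem stmt10 {Θ : Type*} [MeasurableSpace Θ] (Q : Measure Θ) [IsProbabilityMeasure Q]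
    (f : ℝ → ℝ) (hconv : ConvexOn ℝ (Set.Ioi (0 : ℝ)) f)
    (hdiff : DifferentiableOn ℝ f (Set.Ioi (0 : ℝ)))
    (α : ℝ) (hα : 0 < α) (β : ℝ)
    (L : Θ → ℝ) (hL : Measurable L)
    (gt : Θ → ℝ) (hgt : Measurable gt) (hgtpos : ∀ θ, 0 < gt θ)
    (hgtnorm : ∫ θ, gt θ ∂Q = 1)
    (hstat : ∀ᵐ θ ∂Q, deriv f (gt θ) = -α * L θ - β)
    (hint1 : Integrable (fun θ => f (gt θ)) Q)
    (hint2 : Integrable (fun θ => L θ * gt θ) Q) :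
    ∀ g : Θ → ℝ, Measurable g → (∀ θ, 0 < g θ) → (∫ θ, g θ ∂Q = 1) →
      Integrable (fun θ => f (g θ)) Q → Integrable (fun θ => L θ * g θ) Q →
      ∫ θ, (f (gt θ) + α * L θ * gt θ) ∂Q ≤ ∫ θ, (f (g θ) + α * L θ * g θ) ∂Q := by
  intro g hg hgpos hgnorm hgi1 hgi2
  -- integrability of g and gt
  have hgint : Integrable g Q := by
    by_contra h
    rw [integral_undef h] at hgnorm; exact one_ne_zero hgnorm.symm
  have hgtint : Integrable gt Q := by
    by_contra h
    rw [integral_undef h] at hgtnorm; exact one_ne_zero hgtnorm.symm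
  have key : ∀ᵐ θ ∂Q, f (gt θ) + α * L θ * gt θ ≤
      f (g θ) + α * L θ * g θ + β * (g θ - gt θ) := by
    filter_upwards [hstat] with θ hθ
    have h1 := grad_ineq hconv hdiff (hgtpos θ) (hgpos θ)
    rw [hθ] at h1
    nlinarith [h1]
  have hA : Integrable (fun θ => f (g θ) + α * L θ * g θ) Q :=
    hgi1.add (hgi2.const_mul α |>.congr (by filter_upwards with θ; ring))
  have hB : Integrable (fun θ => β * (g θ - gt θ)) Q :=
    ((hgint.sub hgtint).const_mul β).congr (by filter_upwards with θ; rfl)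
  have hRHSint : Integrable (fun θ => f (g θ) + α * L θ * g θ + β * (g θ - gt θ)) Q :=
    hA.add hB
  have hLHSint : Integrable (fun θ => f (gt θ) + α * L θ * gt θ) Q :=
    hint1.add (hint2.const_mul α |>.congr (by filter_upwards with θ; ring))
  have := integral_mono_ae hLHSint hRHSint key
  have heq : ∫ θ, (f (g θ) + α * L θ * g θ + β * (g θ - gt θ)) ∂Q
      = ∫ θ, (f (g θ) + α * L θ * g θ) ∂Q := by
    rw [integral_add hA hB, integral_const_mul, integral_sub hgint hgtint, hgnorm, hgtnorm]
    simp
  rw [heq] at this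
  convert this using 2 <;> ring
end

section
/- Let (Θ, Q) be a probability space, f : (0,∞) → ℝ strictly convex and differentiable, α > 0, β ∈ ℝ, and L : Θ → ℝ measurable. Let g̃ : Θ → (0,∞) be measurable with ∫ g̃ ∂Q = 1, f'(g̃(θ)) = −α * L(θ) − β for Q-almost every θ, and f ∘ g̃, L * g̃ Q-integrable. If g : Θ → (0,∞) is measurable with ∫ g ∂Q = 1, f ∘ g and L * g Q-integrable, and ∫ (f(g) + α * L * g) ∂Q = ∫ (f(g̃) + α * L * g̃) ∂Q, then g = g̃ Q-almost everywhere. -/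
open MeasureTheory

/-- First-order strict inequality for strictly convex differentiable functions. -/
lemma strict_first_order {f : ℝ → ℝ} (hconv : StrictConvexOn ℝ (Set.Ioi (0 : ℝ)) f)
    (hdiff : DifferentiableOn ℝ f (Set.Ioi (0 : ℝ)))
    {x y : ℝ} (hx : 0 < x) (hy : 0 < y) (hne : y ≠ x) :
    f x + deriv f x * (y - x) < f y := by
  have hdx : DifferentiableAt ℝ f x :=
    (hdiff x hx).differentiableAt (isOpen_Ioi.mem_nhds hx)
  rcases lt_or_gt_of_ne hne with h | h
  · -- y < x
    have := hconv.slope_lt_of_hasDerivAt hy hx h hdx.hasDerivAt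
    rw [slope_def_field] at this
    have hxy : 0 < x - y := by linarith
    rw [div_lt_iff₀ hxy] at this
    nlinarith
  · -- x < y
    have := hconv.lt_slope_of_hasDerivAt hx hy h hdx.hasDerivAt
    rw [slope_def_field] at this
    have hxy : 0 < y - x := by linarith
    rw [lt_div_iff₀ hxy] at this
    nlinarith

theorem stmt11 {Θ : Type*} [MeasurableSpace Θ] (Q : Measure Θ) [IsProbabilityMeasure Q]
    (f : ℝ → ℝ) (hconv : StrictConvexOn ℝ (Set.Ioi (0 : ℝ)) f)
    (hdiff : DifferentiableOn ℝ f (Set.Ioi (0 : ℝ)))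
    (α : ℝ) (hα : 0 < α) (β : ℝ)
    (L : Θ → ℝ) (hL : Measurable L)
    (gt : Θ → ℝ) (hgt : Measurable gt) (hgtpos : ∀ θ, 0 < gt θ)
    (hgtnorm : ∫ θ, gt θ ∂Q = 1)
    (hstat : ∀ᵐ θ ∂Q, deriv f (gt θ) = -α * L θ - β)
    (hint1 : Integrable (fun θ => f (gt θ)) Q)
    (hint2 : Integrable (fun θ => L θ * gt θ) Q)
    (g : Θ → ℝ) (hg : Measurable g) (hgpos : ∀ θ, 0 < g θ)
    (hgnorm : ∫ θ, g θ ∂Q = 1)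
    (hint3 : Integrable (fun θ => f (g θ)) Q)
    (hint4 : Integrable (fun θ => L θ * g θ) Q)
    (heq : ∫ θ, (f (g θ) + α * L θ * g θ) ∂Q = ∫ θ, (f (gt θ) + α * L θ * gt θ) ∂Q) :
    g =ᵐ[Q] gt := by
  -- g and gt are integrable since their integrals are 1 ≠ 0
  have hgint : Integrable g Q := by
    by_contra h
    rw [integral_undef h] at hgnorm; norm_num at hgnorm
  have hgtint : Integrable gt Q := by
    by_contra h
    rw [integral_undef h] at hgtnorm; norm_num at hgtnorm
  set φ : Θ → ℝ := fun θ =>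
    f (g θ) + α * L θ * g θ - (f (gt θ) + α * L θ * gt θ) + β * (g θ - gt θ) with hφ
  have hA : Integrable (fun θ => f (g θ) + α * L θ * g θ) Q := by
    have := hint3.add (hint4.const_mul α)
    refine this.congr (Filter.Eventually.of_forall fun θ => ?_)
    simp; ring
  have hB : Integrable (fun θ => f (gt θ) + α * L θ * gt θ) Q := by
    have := hint1.add (hint2.const_mul α)
    refine this.congr (Filter.Eventually.of_forall fun θ => ?_)
    simp; ring
  have hC : Integrable (fun θ => f (g θ) + α * L θ * g θ - (f (gt θ) + α * L θ * gt θ)) Q :=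
    hA.sub hB
  have hD : Integrable (fun θ => β * (g θ - gt θ)) Q := by
    have := (hgint.sub hgtint).const_mul β
    exact this.congr (Filter.Eventually.of_forall fun θ => by simp)
  have hφint : Integrable φ Q := hC.add hD
  have hφ0 : ∀ᵐ θ ∂Q, 0 ≤ φ θ := by
    filter_upwards [hstat] with θ hs
    have key := strict_first_order hconv hdiff (hgtpos θ) (hgpos θ)
    by_cases hne : g θ = gt θ
    · simp [hφ, hne]
    · have := key hne
      rw [hs] at this
      simp only [hφ]
      nlinarith
  have hφeq : ∫ θ, φ θ ∂Q = 0 := by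
    have h1 : ∫ θ, (f (g θ) + α * L θ * g θ - (f (gt θ) + α * L θ * gt θ)) ∂Q = 0 := by
      rw [integral_sub hA hB, heq, sub_self]
    have h2 : ∫ θ, β * (g θ - gt θ) ∂Q = 0 := by
      rw [integral_const_mul, integral_sub hgint hgtint, hgnorm, hgtnorm, sub_self, mul_zero]
    calc ∫ θ, φ θ ∂Q
        = (∫ θ, (f (g θ) + α * L θ * g θ - (f (gt θ) + α * L θ * gt θ)) ∂Q)
          + ∫ θ, β * (g θ - gt θ) ∂Q := integral_add hC hD
      _ = 0 := by rw [h1, h2, add_zero]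
  have hzero : φ =ᵐ[Q] 0 :=
    (integral_eq_zero_iff_of_nonneg_ae hφ0 hφint).mp hφeq
  filter_upwards [hstat, hzero] with θ hs hz
  by_contra hne
  have key := strict_first_order hconv hdiff (hgtpos θ) (hgpos θ) hne
  rw [hs] at key
  simp only [hφ, Pi.zero_apply] at hz
  nlinarith
end

section
/- Let (Θ, Q) be a probability space, let f₁, f₂ : (0,∞) → ℝ be strictly convex and differentiable, α > 0, c, c' ∈ ℝ, and L : Θ → ℝ measurable. Suppose g̃ : Θ → (0,∞) is measurable with ∫ g̃ ∂Q = 1, f₁'(g̃(θ)) = −α * L(θ) − c for Q-almost every θ, and all compositions f₁ ∘ g̃, f₂ ∘ g̃, L * g̃ are Q-integrable. Define v : ℝ → ℝ by v(x) = −(1/α) * f₂'((f₁')⁻¹(−α * x − c)) − c'/α on the set where −α x − c is in the range of f₁'. Then f₂'(g̃(θ)) = −α * v(L(θ)) − c' Q-almost everywhere, and consequently g̃ is simultaneously the Q-a.e. unique minimizer of ∫ f₁(g) ∂Q + α ∫ L * g ∂Q and of ∫ f₂(g) ∂Q + α ∫ v(L) * g ∂Q over all measurable g : Θ → (0,∞)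 with ∫ g ∂Q = 1 satisfying the corresponding integrability conditions. -/
open MeasureTheory

/-- Gradient inequality for a strictly convex differentiable function on `Ioi 0`:
strict version. -/
lemma grad_lt_aux {f : ℝ → ℝ} (hconv : StrictConvexOn ℝ (Set.Ioi (0 : ℝ)) f)
    (hdiff : DifferentiableOn ℝ f (Set.Ioi (0 : ℝ))) {x y : ℝ} (hx : 0 < x) (hy : 0 < y)
    (hne : x ≠ y) : f x + deriv f x * (y - x) < f y := by
  have hdx : DifferentiableAt ℝ f x :=
    (hdiff x hx).differentiableAt (isOpen_Ioi.mem_nhds hx)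
  rcases lt_or_gt_of_ne hne with h | h
  · have := hconv.deriv_lt_slope hx hy h hdx
    rw [slope_def_field, div_eq_inv_mul, lt_inv_mul_iff₀ (by linarith : (0:ℝ) < y - x)] at this
    nlinarith
  · have := hconv.slope_lt_deriv hy hx h hdx
    rw [slope_def_field, div_eq_inv_mul, inv_mul_lt_iff₀ (by linarith : (0:ℝ) < x - y)] at this
    nlinarith

lemma grad_le_aux {f : ℝ → ℝ} (hconv : StrictConvexOn ℝ (Set.Ioi (0 : ℝ)) f)
    (hdiff : DifferentiableOn ℝ f (Set.Ioi (0 : ℝ))) {x y : ℝ} (hx : 0 < x) (hy : 0 < y) :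
    f x + deriv f x * (y - x) ≤ f y := by
  rcases eq_or_ne x y with rfl | hne
  · simp
  · exact (grad_lt_aux hconv hdiff hx hy hne).le

/-- Densities with integral 1 are integrable. -/
lemma my_integrable_of_integral_eq_one {Θ : Type*} [MeasurableSpace Θ] {Q : Measure Θ}
    {g : Θ → ℝ} (h : ∫ θ, g θ ∂Q = 1) : Integrable g Q := by
  by_contra hc
  rw [integral_undef hc] at h
  norm_num at h

/-- Key minimization lemma: if `deriv f (gt θ) = -α R θ - c` a.e., then `gt` minimizes
the `f`-objective with regularizer `R`, uniquely a.e. -/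
lemma key_aux {Θ : Type*} [MeasurableSpace Θ] (Q : Measure Θ) [IsProbabilityMeasure Q]
    {f : ℝ → ℝ} (hconv : StrictConvexOn ℝ (Set.Ioi (0 : ℝ)) f)
    (hdiff : DifferentiableOn ℝ f (Set.Ioi (0 : ℝ)))
    {α : ℝ} (hα : 0 < α) (c : ℝ) (R : Θ → ℝ)
    (gt : Θ → ℝ) (hgtpos : ∀ θ, 0 < gt θ) (hgtnorm : ∫ θ, gt θ ∂Q = 1)
    (hstat : ∀ᵐ θ ∂Q, deriv f (gt θ) = -α * R θ - c)
    (hintf : Integrable (fun θ => f (gt θ)) Q) (hintR : Integrable (fun θ => R θ * gt θ) Q)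
    (g : Θ → ℝ) (hgpos : ∀ θ, 0 < g θ) (hgnorm : ∫ θ, g θ ∂Q = 1)
    (hintfg : Integrable (fun θ => f (g θ)) Q) (hintRg : Integrable (fun θ => R θ * g θ) Q) :
    (∫ θ, f (gt θ) ∂Q + α * ∫ θ, R θ * gt θ ∂Q ≤
        ∫ θ, f (g θ) ∂Q + α * ∫ θ, R θ * g θ ∂Q) ∧
    ((∫ θ, f (g θ) ∂Q + α * ∫ θ, R θ * g θ ∂Q =
        ∫ θ, f (gt θ) ∂Q + α * ∫ θ, R θ * gt θ ∂Q) → g =ᵐ[Q] gt) := by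
  have hgint : Integrable g Q := my_integrable_of_integral_eq_one hgnorm
  have hgtint : Integrable gt Q := my_integrable_of_integral_eq_one hgtnorm
  set h : Θ → ℝ := fun θ =>
    (f (g θ) + (α * (R θ * g θ) + c * g θ)) - (f (gt θ) + (α * (R θ * gt θ) + c * gt θ))
    with hh
  have hA : Integrable (fun θ => f (g θ) + (α * (R θ * g θ) + c * g θ)) Q :=
    hintfg.add ((hintRg.const_mul α).add (hgint.const_mul c))
  have hB : Integrable (fun θ => f (gt θ) + (α * (R θ * gt θ) + c * gt θ)) Q :=
    hintf.add ((hintR.const_mul α).add (hgtint.const_mul c))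
  have hint : Integrable h Q := hA.sub hB
  have h2 : Integrable (fun θ => α * (R θ * g θ) + c * g θ) Q :=
    (hintRg.const_mul α).add (hgint.const_mul c)
  have h2t : Integrable (fun θ => α * (R θ * gt θ) + c * gt θ) Q :=
    (hintR.const_mul α).add (hgtint.const_mul c)
  have iA : ∫ θ, (f (g θ) + (α * (R θ * g θ) + c * g θ)) ∂Q =
      ∫ θ, f (g θ) ∂Q + (α * ∫ θ, R θ * g θ ∂Q + c * 1) := by
    rw [integral_add hintfg h2,
      integral_add (hintRg.const_mul α) (hgint.const_mul c),
      integral_const_mul, integral_const_mul, hgnorm]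
  have iB : ∫ θ, (f (gt θ) + (α * (R θ * gt θ) + c * gt θ)) ∂Q =
      ∫ θ, f (gt θ) ∂Q + (α * ∫ θ, R θ * gt θ ∂Q + c * 1) := by
    rw [integral_add hintf h2t,
      integral_add (hintR.const_mul α) (hgtint.const_mul c),
      integral_const_mul, integral_const_mul, hgtnorm]
  have hInt : ∫ θ, h θ ∂Q =
      (∫ θ, f (g θ) ∂Q + α * ∫ θ, R θ * g θ ∂Q) -
      (∫ θ, f (gt θ) ∂Q + α * ∫ θ, R θ * gt θ ∂Q) := by
    simp only [hh]
    rw [integral_sub hA hB, iA, iB]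
    ring
  have hnonneg : ∀ᵐ θ ∂Q, 0 ≤ h θ := by
    filter_upwards [hstat] with θ hθ
    have := grad_le_aux hconv hdiff (hgtpos θ) (hgpos θ)
    rw [hθ] at this
    simp only [hh]
    nlinarith [this]
  constructor
  · have h0 : 0 ≤ ∫ θ, h θ ∂Q := integral_nonneg_of_ae hnonneg
    linarith [hInt ▸ h0]
  · intro heq
    have hz : ∫ θ, h θ ∂Q = 0 := by rw [hInt, heq]; ring
    have := (integral_eq_zero_iff_of_nonneg_ae hnonneg hint).mp hz
    filter_upwards [hstat, this] with θ hθ hθ0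
    by_contra hne
    have hlt := grad_lt_aux hconv hdiff (hgtpos θ) (hgpos θ) (Ne.symm hne)
    rw [hθ] at hlt
    have : h θ = 0 := hθ0
    simp only [hh] at this
    nlinarith

theorem stmt13 {Θ : Type*} [MeasurableSpace Θ] (Q : Measure Θ) [IsProbabilityMeasure Q]
    (f₁ f₂ : ℝ → ℝ)
    (hconv₁ : StrictConvexOn ℝ (Set.Ioi (0 : ℝ)) f₁)
    (hdiff₁ : DifferentiableOn ℝ f₁ (Set.Ioi (0 : ℝ)))
    (hconv₂ : StrictConvexOn ℝ (Set.Ioi (0 : ℝ)) f₂)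
    (hdiff₂ : DifferentiableOn ℝ f₂ (Set.Ioi (0 : ℝ)))
    (α : ℝ) (hα : 0 < α) (c c' : ℝ)
    (L : Θ → ℝ) (hL : Measurable L)
    (gt : Θ → ℝ) (hgt : Measurable gt) (hgtpos : ∀ θ, 0 < gt θ)
    (hgtnorm : ∫ θ, gt θ ∂Q = 1)
    (hstat : ∀ᵐ θ ∂Q, deriv f₁ (gt θ) = -α * L θ - c)
    (hint1 : Integrable (fun θ => f₁ (gt θ)) Q)
    (hint2 : Integrable (fun θ => f₂ (gt θ)) Q)
    (hint3 : Integrable (fun θ => L θ * gt θ) Q)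
    -- the transformation function `v(x) = −(1/α) f₂'((f₁')⁻¹(−αx − c)) − c'/α`
    (v : ℝ → ℝ)
    (hv : ∀ x : ℝ, (-α * x - c) ∈ deriv f₁ '' Set.Ioi (0 : ℝ) →
      v x = -(1 / α) *
          deriv f₂ (Function.invFunOn (deriv f₁) (Set.Ioi (0 : ℝ)) (-α * x - c)) - c' / α)
    (hint4 : Integrable (fun θ => v (L θ) * gt θ) Q) :
    -- `g̃` satisfies the stationarity condition for `f₂` with regularizer `v ∘ L`
    (∀ᵐ θ ∂Q, deriv f₂ (gt θ) = -α * v (L θ) - c') ∧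
    -- `g̃` is the Q-a.e. unique minimizer of the `f₁`-objective with regularizer `L`
    (∀ g : Θ → ℝ, Measurable g → (∀ θ, 0 < g θ) → (∫ θ, g θ ∂Q = 1) →
      Integrable (fun θ => f₁ (g θ)) Q → Integrable (fun θ => L θ * g θ) Q →
      (∫ θ, (f₁ (gt θ)) ∂Q + α * ∫ θ, L θ * gt θ ∂Q ≤
        ∫ θ, (f₁ (g θ)) ∂Q + α * ∫ θ, L θ * g θ ∂Q) ∧
      ((∫ θ, (f₁ (g θ)) ∂Q + α * ∫ θ, L θ * g θ ∂Q =
        ∫ θ, (f₁ (gt θ)) ∂Q + α * ∫ θ, L θ * gt θ ∂Q) → g =ᵐ[Q] gt)) ∧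
    -- `g̃` is the Q-a.e. unique minimizer of the `f₂`-objective with regularizer `v ∘ L`
    (∀ g : Θ → ℝ, Measurable g → (∀ θ, 0 < g θ) → (∫ θ, g θ ∂Q = 1) →
      Integrable (fun θ => f₂ (g θ)) Q → Integrable (fun θ => v (L θ) * g θ) Q →
      (∫ θ, (f₂ (gt θ)) ∂Q + α * ∫ θ, v (L θ) * gt θ ∂Q ≤
        ∫ θ, (f₂ (g θ)) ∂Q + α * ∫ θ, v (L θ) * g θ ∂Q) ∧
      ((∫ θ, (f₂ (g θ)) ∂Q + α * ∫ θ, v (L θ) * g θ ∂Q =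
        ∫ θ, (f₂ (gt θ)) ∂Q + α * ∫ θ, v (L θ) * gt θ ∂Q) → g =ᵐ[Q] gt)) := by
  have hinj : Set.InjOn (deriv f₁) (Set.Ioi (0 : ℝ)) := by
    refine (hconv₁.strictMonoOn_deriv ?_).injOn
    intro x hx
    exact (hdiff₁ x hx).differentiableAt (isOpen_Ioi.mem_nhds hx)
  have hstat2 : ∀ᵐ θ ∂Q, deriv f₂ (gt θ) = -α * v (L θ) - c' := by
    filter_upwards [hstat] with θ hθ
    have hmem : (-α * L θ - c) ∈ deriv f₁ '' Set.Ioi (0 : ℝ) :=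
      ⟨gt θ, hgtpos θ, hθ⟩
    have hinvfun : Function.invFunOn (deriv f₁) (Set.Ioi (0 : ℝ)) (-α * L θ - c) = gt θ := by
      rw [← hθ]
      exact hinj.leftInvOn_invFunOn (hgtpos θ)
    rw [hv (L θ) hmem, hinvfun]
    field_simp
    ring
  refine ⟨hstat2, ?_, ?_⟩
  · intro g hgm hgpos hgnorm hintfg hintRg
    exact key_aux Q hconv₁ hdiff₁ hα c L gt hgtpos hgtnorm hstat hint1 hint3
      g hgpos hgnorm hintfg hintRg
  · intro g hgm hgpos hgnorm hintfg hintRg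
    exact key_aux Q hconv₂ hdiff₂ hα c' (fun θ => v (L θ)) gt hgtpos hgtnorm hstat2 hint2 hint4
      g hgpos hgnorm hintfg hintRg
end
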